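/- arXiv:1106.5154 — 2 statements merged into one kernel-verified Lean document; each statement's English description precedes it below -/
import Mathlib

section
/- Let A be a Noetherian ring, M a finitely generated A-module, I an ideal of A, and N a submodule of M. Then there exists a natural number μ such that for all integers r ≥ 0, I^(μ+r)·M ∩ N = I^r·(I^μ·M ∩ N). -/
universe u v

variable {R : Type u} {M : Type v} [CommRing R] [AddCommGroup M] [Module R M] (I : Ideal R)

open Polynomial

open scoped Polynomial

/-- An `I`-filtration on the module `M` is a sequence of decreasing submodules `N i` such that
`I • (N i) ≤ N (i + 1)`. Note that we do not require the filtration to start from `⊤`. -/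
@[ext]
structure Ideal.Filtration' (M : Type v) [AddCommGroup M] [Module R M] where
  N : ℕ → Submodule R M
  mono : ∀ i, N (i + 1) ≤ N i
  smul_le : ∀ i, I • N i ≤ N (i + 1)

variable (F F' : I.Filtration' M) {I}

namespace Ideal.Filtration'

theorem pow_smul_le (i j : ℕ) : I ^ i • F.N j ≤ F.N (i + j) := by
  induction' i with _ ih
  · simp
  · rw [pow_succ', mul_smul, add_assoc, add_comm 1, ← add_assoc]
    exact (smul_mono_right _ ih).trans (F.smul_le _)

theorem pow_smul_le_pow_smul (i j k : ℕ) : I ^ (i + k) • F.N j ≤ I ^ k • F.N (i + j) := by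
  rw [add_comm, pow_add, mul_smul]
  exact smul_mono_right _ (F.pow_smul_le i j)

protected theorem antitone : Antitone F.N :=
  antitone_nat_of_succ_le F.mono

/-- The trivial `I`-filtration of `N`. -/
@[simps]
def _root_.Ideal.trivialFiltration2 (I : Ideal R) (N : Submodule R M) : I.Filtration' M where
  N _ := N
  mono _ := le_rfl
  smul_le _ := Submodule.smul_le_right

/-- The `sup` of two `I.Filtration'`s is an `I.Filtration'`. -/
instance : Max (I.Filtration' M) :=
  ⟨fun F F' =>
    ⟨F.N ⊔ F'.N, fun i => sup_le_sup (F.mono i) (F'.mono i), fun i =>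
      (Submodule.smul_sup _ _ _).trans_le <| sup_le_sup (F.smul_le i) (F'.smul_le i)⟩⟩

/-- The `sSup` of a family of `I.Filtration'`s is an `I.Filtration'`. -/
instance : SupSet (I.Filtration' M) :=
  ⟨fun S =>
    { N := sSup (Ideal.Filtration'.N '' S)
      mono := fun i => by
        apply sSup_le_sSup_of_isCofinalFor _
        rintro _ ⟨⟨_, F, hF, rfl⟩, rfl⟩
        exact ⟨_, ⟨⟨_, F, hF, rfl⟩, rfl⟩, F.mono i⟩
      smul_le := fun i => by
        rw [sSup_eq_iSup', iSup_apply, Submodule.smul_iSup, iSup_apply]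
        apply iSup_mono _
        rintro ⟨_, F, hF, rfl⟩
        exact F.smul_le i }⟩

/-- The `inf` of two `I.Filtration'`s is an `I.Filtration'`. -/
instance : Min (I.Filtration' M) :=
  ⟨fun F F' =>
    ⟨F.N ⊓ F'.N, fun i => inf_le_inf (F.mono i) (F'.mono i), fun i =>
      (smul_inf_le _ _ _).trans <| inf_le_inf (F.smul_le i) (F'.smul_le i)⟩⟩

/-- The `sInf` of a family of `I.Filtration'`s is an `I.Filtration'`. -/
instance : InfSet (I.Filtration' M) :=
  ⟨fun S =>
    { N := sInf (Ideal.Filtration'.N '' S)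
      mono := fun i => by
        apply sInf_le_sInf_of_isCoinitialFor _
        rintro _ ⟨⟨_, F, hF, rfl⟩, rfl⟩
        exact ⟨_, ⟨⟨_, F, hF, rfl⟩, rfl⟩, F.mono i⟩
      smul_le := fun i => by
        rw [sInf_eq_iInf', iInf_apply, iInf_apply]
        refine smul_iInf_le.trans ?_
        apply iInf_mono _
        rintro ⟨_, F, hF, rfl⟩
        exact F.smul_le i }⟩

instance : Top (I.Filtration' M) :=
  ⟨I.trivialFiltration2 ⊤⟩

instance : Bot (I.Filtration' M) :=
  ⟨I.trivialFiltration2 ⊥⟩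

@[simp]
theorem sup_N : (F ⊔ F').N = F.N ⊔ F'.N :=
  rfl

@[simp]
theorem sSup_N (S : Set (I.Filtration' M)) : (sSup S).N = sSup (Ideal.Filtration'.N '' S) :=
  rfl

@[simp]
theorem inf_N : (F ⊓ F').N = F.N ⊓ F'.N :=
  rfl

@[simp]
theorem sInf_N (S : Set (I.Filtration' M)) : (sInf S).N = sInf (Ideal.Filtration'.N '' S) :=
  rfl

@[simp]
theorem top_N : (⊤ : I.Filtration' M).N = ⊤ :=
  rfl

@[simp]
theorem bot_N : (⊥ : I.Filtration' M).N = ⊥ :=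
  rfl

@[simp]
theorem iSup_N {ι : Sort*} (f : ι → I.Filtration' M) : (iSup f).N = ⨆ i, (f i).N :=
  congr_arg sSup (Set.range_comp _ _).symm

@[simp]
theorem iInf_N {ι : Sort*} (f : ι → I.Filtration' M) : (iInf f).N = ⨅ i, (f i).N :=
  congr_arg sInf (Set.range_comp _ _).symm

instance : PartialOrder (I.Filtration' M) :=
  PartialOrder.lift _ fun _ _ ↦ Ideal.Filtration'.ext

instance : CompleteLattice (I.Filtration' M) :=
  Function.Injective.completeLattice Ideal.Filtration'.N
    (fun _ _ => Ideal.Filtration'.ext) .rfl .rfl sup_N inf_N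
    (fun _ => sSup_image) (fun _ => sInf_image) top_N bot_N

instance : Inhabited (I.Filtration' M) :=
  ⟨⊥⟩

/-- An `I` filtration is stable if `I • F.N n = F.N (n+1)` for large enough `n`. -/
def Stable : Prop :=
  ∃ n₀, ∀ n ≥ n₀, I • F.N n = F.N (n + 1)

/-- The trivial stable `I`-filtration of `N`. -/
@[simps]
def _root_.Ideal.stableFiltration2 (I : Ideal R) (N : Submodule R M) : I.Filtration' M where
  N i := I ^ i • N
  mono i := by rw [add_comm, pow_add, mul_smul]; exact Submodule.smul_le_right
  smul_le i := by rw [add_comm, pow_add, mul_smul, pow_one]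

theorem _root_.Ideal.stableFiltration2_stable (I : Ideal R) (N : Submodule R M) :
    (I.stableFiltration2 N).Stable := by
  use 0
  intro n _
  simp only [stableFiltration2_N]
  rw [add_comm, pow_add, mul_smul, pow_one]

variable {F F'}

theorem Stable.exists_pow_smul_eq (h : F.Stable) : ∃ n₀, ∀ k, F.N (n₀ + k) = I ^ k • F.N n₀ := by
  obtain ⟨n₀, hn⟩ := h
  use n₀
  intro k
  induction' k with _ ih
  · simp
  · rw [← add_assoc, ← hn, ih, add_comm, pow_add, mul_smul, pow_one]
    omega

theorem Stable.exists_pow_smul_eq_of_ge (h : F.Stable) :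
    ∃ n₀, ∀ n ≥ n₀, F.N n = I ^ (n - n₀) • F.N n₀ := by
  obtain ⟨n₀, hn₀⟩ := h.exists_pow_smul_eq
  use n₀
  intro n hn
  convert hn₀ (n - n₀)
  rw [add_comm, tsub_add_cancel_of_le hn]

theorem stable_iff_exists_pow_smul_eq_of_ge :
    F.Stable ↔ ∃ n₀, ∀ n ≥ n₀, F.N n = I ^ (n - n₀) • F.N n₀ := by
  refine ⟨Stable.exists_pow_smul_eq_of_ge, fun h => ⟨h.choose, fun n hn => ?_⟩⟩
  rw [h.choose_spec n hn, h.choose_spec (n + 1) (by omega), smul_smul, ← pow_succ',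
    tsub_add_eq_add_tsub hn]

theorem Stable.exists_forall_le (h : F.Stable) (e : F.N 0 ≤ F'.N 0) :
    ∃ n₀, ∀ n, F.N (n + n₀) ≤ F'.N n := by
  obtain ⟨n₀, hF⟩ := h
  use n₀
  intro n
  induction' n with n hn
  · refine (F.antitone ?_).trans e; simp
  · rw [add_right_comm, ← hF]
    · exact (smul_mono_right _ hn).trans (F'.smul_le _)
    simp

theorem Stable.bounded_difference (h : F.Stable) (h' : F'.Stable) (e : F.N 0 = F'.N 0) :
    ∃ n₀, ∀ n, F.N (n + n₀) ≤ F'.N n ∧ F'.N (n + n₀) ≤ F.N n := by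
  obtain ⟨n₁, h₁⟩ := h.exists_forall_le (le_of_eq e)
  obtain ⟨n₂, h₂⟩ := h'.exists_forall_le (le_of_eq e.symm)
  use max n₁ n₂
  intro n
  refine ⟨(F.antitone ?_).trans (h₁ n), (F'.antitone ?_).trans (h₂ n)⟩ <;> simp

open PolynomialModule

variable (F F')

/-- The `R[IX]`-submodule of `M[X]` associated with an `I`-filtration. -/
protected noncomputable def submodule : Submodule (reesAlgebra I) (PolynomialModule R M) where
  carrier := { f | ∀ i, f.coeff i ∈ F.N i }
  add_mem' hf hg i := Submodule.add_mem _ (hf i) (hg i)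
  zero_mem' _ := Submodule.zero_mem _
  smul_mem' r f hf i := by
    rw [Subalgebra.smul_def, PolynomialModule.smul_apply]
    apply Submodule.sum_mem
    rintro ⟨j, k⟩ e
    rw [Finset.HasAntidiagonal.mem_antidiagonal] at e
    subst e
    exact F.pow_smul_le j k (Submodule.smul_mem_smul (r.2 j) (hf k))

@[simp]
theorem mem_submodule (f : PolynomialModule R M) : f ∈ F.submodule ↔ ∀ i, f.coeff i ∈ F.N i :=
  Iff.rfl

theorem inf_submodule : (F ⊓ F').submodule = F.submodule ⊓ F'.submodule := by
  ext
  exact forall_and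

variable (I M)

/-- `Ideal.Filtration'.submodule` as an `InfHom`. -/
noncomputable def submoduleInfHom :
    InfHom (I.Filtration' M) (Submodule (reesAlgebra I) (PolynomialModule R M)) where
  toFun := Ideal.Filtration'.submodule
  map_inf' := inf_submodule

variable {I M}

theorem submodule_closure_single :
    AddSubmonoid.closure (⋃ i, single R i '' (F.N i : Set M)) = F.submodule.toAddSubmonoid := by
  apply le_antisymm
  · rw [AddSubmonoid.closure_le, Set.iUnion_subset_iff]
    rintro i _ ⟨m, hm, rfl⟩ j
    rw [coeff_single, Finsupp.single_apply]
    split_ifs with h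
    · rwa [← h]
    · exact (F.N j).zero_mem
  · intro f hf
    rw [← f.ofCoeff_coeff, ← f.coeff.sum_single, ofCoeff_finsuppSum]
    apply AddSubmonoid.sum_mem _ _
    rintro c -
    exact AddSubmonoid.subset_closure (Set.subset_iUnion _ c <| Set.mem_image_of_mem _ (hf c))

theorem submodule_span_single :
    Submodule.span (reesAlgebra I) (⋃ i, single R i '' (F.N i : Set M)) = F.submodule := by
  rw [← Submodule.span_closure, submodule_closure_single, Submodule.coe_toAddSubmonoid]
  exact Submodule.span_eq (Filtration'.submodule F)

theorem submodule_eq_span_le_iff_stable_ge (n₀ : ℕ) :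
    F.submodule = Submodule.span _ (⋃ i ≤ n₀, single R i '' (F.N i : Set M)) ↔
      ∀ n ≥ n₀, I • F.N n = F.N (n + 1) := by
  rw [← submodule_span_single,
    ← (Submodule.span_mono (Set.iUnion₂_subset_iUnion _ _)).ge_iff_eq',
    Submodule.span_le, Set.iUnion_subset_iff]
  constructor
  · intro H n hn
    refine (F.smul_le n).antisymm ?_
    intro x hx
    obtain ⟨l, hl⟩ := (Finsupp.mem_span_iff_linearCombination _ _ _).mp (H _ ⟨x, hx, rfl⟩)
    replace hl := congr_arg (fun f : PolynomialModule R M => f.coeff (n + 1)) hl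
    rw [PolynomialModule.coeff_single, Finsupp.single_apply, if_pos rfl] at hl
    rw [← hl, Finsupp.linearCombination_apply, PolynomialModule.coeff_finsuppSum, Finsupp.sum_apply]
    apply Submodule.sum_mem _ _
    rintro ⟨_, _, ⟨n', rfl⟩, _, ⟨hn', rfl⟩, m, hm, rfl⟩ -
    dsimp only [Subtype.coe_mk]
    rw [Subalgebra.smul_def, smul_single_apply, if_pos (show n' ≤ n + 1 by omega)]
    have e : n' ≤ n := by omega
    have := F.pow_smul_le_pow_smul (n - n') n' 1
    rw [tsub_add_cancel_of_le e, pow_one, add_comm _ 1, ← add_tsub_assoc_of_le e, add_comm] at this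
    exact this (Submodule.smul_mem_smul ((l _).2 <| n + 1 - n') hm)
  · let F' := Submodule.span (reesAlgebra I) (⋃ i ≤ n₀, single R i '' (F.N i : Set M))
    intro hF i
    have : ∀ i ≤ n₀, single R i '' (F.N i : Set M) ⊆ F' := by
      -- Porting note: Original proof was
      -- `fun i hi => Set.Subset.trans (Set.subset_iUnion₂ i hi) Submodule.subset_span`
      intro i hi
      refine Set.Subset.trans ?_ Submodule.subset_span
      refine @Set.subset_iUnion₂ _ _ _ (fun i => fun _ => ↑((single R i) '' ((N F i) : Set M))) i ?_
      exact hi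
    induction' i with j hj
    · exact this _ zero_le
    by_cases hj' : j.succ ≤ n₀
    · exact this _ hj'
    simp only [not_le, Nat.lt_succ_iff] at hj'
    rw [← hF _ hj']
    rintro _ ⟨m, hm, rfl⟩
    refine Submodule.smul_induction_on hm (fun r hr m' hm' => ?_) (fun x y hx hy => ?_)
    · rw [add_comm, ← monomial_smul_single]
      exact F'.smul_mem
        ⟨_, reesAlgebra.monomial_mem.mpr (by rwa [pow_one])⟩ (hj <| Set.mem_image_of_mem _ hm')
    · rw [PolynomialModule.single_add]
      exact F'.add_mem hx hy

/-- If the components of a filtration are finitely generated, then the filtration is stable iff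
its associated submodule of is finitely generated. -/
theorem submodule_fg_iff_stable (hF' : ∀ i, (F.N i).FG) : F.submodule.FG ↔ F.Stable := by
  classical
  delta Ideal.Filtration'.Stable
  simp_rw [← F.submodule_eq_span_le_iff_stable_ge]
  constructor
  · rintro H
    refine H.stabilizes_of_iSup_eq
        ⟨fun n₀ => Submodule.span _ (⋃ (i : ℕ) (_ : i ≤ n₀), single R i '' ↑(F.N i)), ?_⟩ ?_
    · intro n m e
      rw [Submodule.span_le, Set.iUnion₂_subset_iff]
      intro i hi
      refine Set.Subset.trans ?_ Submodule.subset_span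
      refine @Set.subset_iUnion₂ _ _ _ (fun i => fun _ => ↑((single R i) '' ((N F i) : Set M))) i ?_
      exact hi.trans e
    · change ⨆ n₀, Submodule.span (reesAlgebra I) (⋃ (i : ℕ) (_ : i ≤ n₀), single R i '' (F.N i : Set M)) = _
      rw [← Submodule.span_iUnion, ← submodule_span_single]
      congr 1
      ext
      simp only [Set.mem_iUnion, Set.mem_image, SetLike.mem_coe, exists_prop]
      constructor
      · rintro ⟨-, i, -, e⟩; exact ⟨i, e⟩
      · rintro ⟨i, e⟩; exact ⟨i, i, le_refl i, e⟩
  · rintro ⟨n, hn⟩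
    rw [hn]
    simp_rw [Submodule.span_iUnion₂, ← Finset.mem_range_succ_iff, iSup_subtype']
    apply Submodule.fg_iSup
    rintro ⟨i, hi⟩
    obtain ⟨s, hs⟩ := hF' i
    have : Submodule.span (reesAlgebra I) (s.image (lsingle R i) : Set (PolynomialModule R M)) =
        Submodule.span _ (single R i '' (F.N i : Set M)) := by
      rw [Finset.coe_image, ← Submodule.span_span_of_tower R, ← Submodule.map_span, hs]; rfl
    rw [Subtype.coe_mk, ← this]
    exact ⟨_, rfl⟩

variable {F}

theorem Stable.of_le [IsNoetherianRing R] [Module.Finite R M] (hF : F.Stable)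
    {F' : I.Filtration' M} (hf : F' ≤ F) : F'.Stable := by
  rw [← submodule_fg_iff_stable] at hF ⊢
  any_goals intro i; exact IsNoetherian.noetherian _
  have := isNoetherian_of_fg_of_noetherian _ hF
  rw [isNoetherian_submodule] at this
  exact this _ (OrderHomClass.mono (submoduleInfHom M I) hf)

theorem Stable.inter_right [IsNoetherianRing R] [Module.Finite R M] (hF : F.Stable) :
    (F ⊓ F').Stable :=
  hF.of_le inf_le_left

theorem Stable.inter_left [IsNoetherianRing R] [Module.Finite R M] (hF : F.Stable) :
    (F' ⊓ F).Stable :=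
  hF.of_le inf_le_right

end Ideal.Filtration'

variable (I)

/-- **Artin-Rees lemma** -/
theorem Ideal.exists_pow_inf_eq_pow_smul' [IsNoetherianRing R] [Module.Finite R M]
    (N : Submodule R M) : ∃ k : ℕ, ∀ n ≥ k, I ^ n • ⊤ ⊓ N = I ^ (n - k) • (I ^ k • ⊤ ⊓ N) :=
  ((I.stableFiltration2_stable ⊤).inter_right (I.trivialFiltration2 N)).exists_pow_smul_eq_of_ge


/-- **Artin–Rees lemma.** For a Noetherian commutative ring `A`, a finitely generated
`A`-module `M`, an ideal `I ⊆ A` and a submodule `N ≤ M`, there is a `μ` such that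
`I^(μ+r) M ⊓ N = I^r (I^μ M ⊓ N)` for all `r ≥ 0`. -/
theorem artin_rees {A : Type*} [CommRing A] [IsNoetherianRing A]
    {M : Type*} [AddCommGroup M] [Module A M] [Module.Finite A M]
    (I : Ideal A) (N : Submodule A M) :
    ∃ μ : ℕ, ∀ r : ℕ,
      (I ^ (μ + r) • (⊤ : Submodule A M)) ⊓ N =
        I ^ r • ((I ^ μ • (⊤ : Submodule A M)) ⊓ N) := by
  obtain ⟨k, hk⟩ := Ideal.exists_pow_inf_eq_pow_smul' (R := A) (M := M) I N
  exact ⟨k, fun r => by simpa using hk (k + r) (Nat.le_add_right k r)⟩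
end

section
/- Let (E¹, f¹), ..., (Eʳ, fʳ) be complexes of modules (each of the form ⋯ → Eᵏ₂ → Eᵏ₁ → Eᵏ₀ → 0). Define H₀ = E¹₀ ⊗ ⋯ ⊗ Eʳ₀ and, for k ≥ 1, H_k = ⊕_{α₁+⋯+α_r = k−1} E¹_{1+α₁} ⊗ ⋯ ⊗ Eʳ_{1+α_r}, with h₁ = f¹₁ ⊗ ⋯ ⊗ fʳ₁ (the induced map H₁ = E¹₁⊗⋯⊗Eʳ₁ → H₀) and for k ≥ 2, h_k the sum over 1 ≤ s ≤ r and j ≥ 2 of the maps induced by fˢ_j (with Koszul signs). Then (H, h) is a complex, i.e., h_k ∘ h_{k+1} = 0 for all k ≥ 1. -/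
open scoped TensorProduct DirectSum

namespace Diamond

variable (R : Type*) [CommRing R] {r : ℕ}
variable (E : Fin r → ℕ → Type*) [∀ k j, AddCommGroup (E k j)] [∀ k j, Module R (E k j)]

/-- The tensor product `E¹_{α 1} ⊗ ⋯ ⊗ Eʳ_{α r}`. -/
abbrev T (α : Fin r → ℕ) : Type _ := ⨂[R] k, E k (α k)

/-- Transport along an equality of indices. -/
def castE (k : Fin r) {i j : ℕ} (h : i = j) : E k i ≃ₗ[R] E k j := by
  subst h; exact LinearEquiv.refl R (E k i)

variable (f : ∀ (k : Fin r) (j : ℕ), E k (j + 1) →ₗ[R] E k j)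

/-- The map on `T α` induced by the differential `fˢ` (without the Koszul sign),
lowering the `s`-th index from `j + 1` to `j`. -/
noncomputable def diffComp (s : Fin r) (j : ℕ) (α : Fin r → ℕ) (h : α s = j + 1) :
    T R E α →ₗ[R] T R E (Function.update α s j) :=
  PiTensorProduct.map fun k => by
    by_cases hk : k = s
    · subst hk
      exact (castE R E k (show j = Function.update α k j k by simp)).toLinearMap ∘ₗ
        (f k j) ∘ₗ (castE R E k h).toLinearMap
    · exact (castE R E k (show α k = Function.update α s j k by
        simp [Function.update_of_ne hk])).toLinearMap

/-- The Koszul sign `(−1)^{deg (e₁ ⊗ ⋯ ⊗ e_{s−1})} = (−1)^{∑_{k<s} α k}`. -/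
def koszulSign (s : Fin r) (α : Fin r → ℕ) : ℤ :=
  (-1) ^ (∑ k ∈ Finset.univ.filter (fun k => k < s), α k)

/-- The total graded module `⊕_α E¹_{α 1} ⊗ ⋯ ⊗ Eʳ_{α r}`. -/
abbrev G : Type _ := ⨁ α : Fin r → ℕ, T R E α

open Classical in
/-- The component of the diamond differential `h` on `T α`: on `α = (1,…,1)` it is the
composition `h₁ = fʳ₁ ⋯ f¹₁`, i.e. `f¹₁ ⊗ ⋯ ⊗ fʳ₁`, and on the other components it is
`∑_{s, α s ≥ 2} fˢ_{α s}` with Koszul signs. -/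
noncomputable def hComp (α : Fin r → ℕ) : T R E α →ₗ[R] G R E := by
  by_cases h1 : α = fun _ => 1
  · subst h1
    exact (DirectSum.lof R _ (fun β => T R E β) fun _ => 0) ∘ₗ
      (PiTensorProduct.map fun k => f k 0)
  · exact ∑ s : Fin r, if h : 2 ≤ α s then
      (DirectSum.lof R _ (fun β => T R E β) (Function.update α s (α s - 1))) ∘ₗ
        (koszulSign s α • diffComp R E f s (α s - 1) α (by omega))
    else 0

/-- The diamond differential on the total graded module. -/
noncomputable def hGlobal : G R E →ₗ[R] G R E :=
  DirectSum.toModule R _ (G R E) (hComp R E f)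

/-- Admissible multidegrees for `H_k`: `H₀ = E¹₀ ⊗ ⋯ ⊗ Eʳ₀` and, for `k ≥ 1`,
`H_k = ⊕_{α₁ + ⋯ + α_r = k − 1} E¹_{1+α₁} ⊗ ⋯ ⊗ Eʳ_{1+α_r}`. -/
def Adm : ℕ → (Fin r → ℕ) → Prop
  | 0, α => α = fun _ => 0
  | k + 1, α => (∀ i, 1 ≤ α i) ∧ ∑ i, α i = k + r

/-- The `k`-th term of the diamond product complex. -/
abbrev H (k : ℕ) : Type _ := ⨁ β : {β : Fin r → ℕ // Adm k β}, T R E β.1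

/-- Inclusion `H_k → G`. -/
noncomputable def incl (k : ℕ) : H R E k →ₗ[R] G R E :=
  DirectSum.toModule R _ (G R E) fun β => DirectSum.lof R _ (fun α => T R E α) β.1

open Classical in
/-- Projection `G → H_k`. -/
noncomputable def proj (k : ℕ) : G R E →ₗ[R] H R E k :=
  DirectSum.toModule R _ (H R E k) fun α =>
    if h : Adm k α then DirectSum.lof R _ (fun β : {β : Fin r → ℕ // Adm k β} => T R E β.1) ⟨α, h⟩
    else 0

/-- The diamond differential `h_{k+1} : H_{k+1} → H_k`. -/
noncomputable def hMap (k : ℕ) : H R E (k + 1) →ₗ[R] H R E k :=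
  proj R E k ∘ₗ hGlobal R E f ∘ₗ incl R E (k + 1)
section Aux
variable {R E f}

lemma castE_trans {k : Fin r} {i j l : ℕ} (h1 : i = j) (h2 : j = l) (x : E k i) :
    castE R E k h2 (castE R E k h1 x) = castE R E k (h1.trans h2) x := by
  subst h1; subst h2; rfl

lemma castE_self {k : Fin r} {i : ℕ} (h : i = i) (x : E k i) : castE R E k h x = x := rfl

end Aux

/-- Transport `T` along an equality of index functions. -/
def castT {γ γ' : Fin r → ℕ} (h : γ = γ') : T R E γ ≃ₗ[R] T R E γ' := by
  subst h; exact LinearEquiv.refl R (T R E γ)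

section Aux2
variable {R E}

lemma castT_tprod {γ γ' : Fin r → ℕ} (h : γ = γ') (x : ∀ k, E k (γ k)) :
    castT R E h (PiTensorProduct.tprod R x) =
      PiTensorProduct.tprod R (fun k => castE R E k (congrFun h k) (x k)) := by
  subst h; rfl

lemma lof_castT {γ γ' : Fin r → ℕ} (h : γ = γ') (y : T R E γ) :
    DirectSum.lof R _ (fun β => T R E β) γ' (castT R E h y) =
      DirectSum.lof R _ (fun β => T R E β) γ y := by
  subst h; rfl

lemma hComp_congr (f : ∀ (k : Fin r) (j : ℕ), E k (j + 1) →ₗ[R] E k j)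
    {γ γ' : Fin r → ℕ} (h : γ = γ') (y : T R E γ) :
    hComp R E f γ' (castT R E h y) = hComp R E f γ y := by
  subst h; rfl

end Aux2
/-- Slotwise action of `diffComp` on components of a pure tensor. -/
noncomputable def dSlot (s : Fin r) (j : ℕ) (α : Fin r → ℕ) (h : α s = j + 1)
    (x : ∀ k, E k (α k)) (k : Fin r) : E k (Function.update α s j k) :=
  if hk : k = s then
    castE R E k (show j = Function.update α s j k by rw [hk]; simp)
      (f k j (castE R E k (show α k = j + 1 by rw [hk]; exact h) (x k)))
  else castE R E k (show α k = Function.update α s j k by rw [Function.update_of_ne hk]) (x k)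

section Aux3
variable {R E f}

lemma diffComp_tprod (s : Fin r) (j : ℕ) (α : Fin r → ℕ) (h : α s = j + 1)
    (x : ∀ k, E k (α k)) :
    diffComp R E f s j α h (PiTensorProduct.tprod R x) =
      PiTensorProduct.tprod R (dSlot R E f s j α h x) := by
  unfold diffComp
  rw [PiTensorProduct.map_tprod]
  congr 1
  funext k
  unfold dSlot
  by_cases hk : k = s
  · subst hk
    simp
  · simp [hk]

lemma dSlot_self (s : Fin r) (j : ℕ) (α : Fin r → ℕ) (h : α s = j + 1)
    (x : ∀ k, E k (α k)) (h1 : j = Function.update α s j s) :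
    dSlot R E f s j α h x s = castE R E s h1 (f s j (castE R E s h (x s))) := by
  unfold dSlot
  rw [dif_pos rfl]

lemma dSlot_ne (s : Fin r) (j : ℕ) (α : Fin r → ℕ) (h : α s = j + 1)
    (x : ∀ k, E k (α k)) {k : Fin r} (hk : k ≠ s) (h1 : α k = Function.update α s j k) :
    dSlot R E f s j α h x k = castE R E k h1 (x k) := by
  unfold dSlot
  rw [dif_neg hk]

end Aux3
section Aux4
variable {R E f}

lemma hComp_one (y : T R E (fun _ => (1:ℕ))) :
    hComp R E f (fun _ => 1) y =
      DirectSum.lof R _ (fun β => T R E β) (fun _ => 0)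
        (PiTensorProduct.map (fun k => f k 0) y) := by
  unfold hComp
  rw [dif_pos rfl]
  rfl

open Classical in
lemma hComp_ne {α : Fin r → ℕ} (h1 : α ≠ fun _ => 1) :
    hComp R E f α = ∑ s : Fin r, if h : 2 ≤ α s then
      (DirectSum.lof R _ (fun β => T R E β) (Function.update α s (α s - 1))) ∘ₗ
        (koszulSign s α • diffComp R E f s (α s - 1) α (by omega))
    else 0 := by
  unfold hComp
  rw [dif_neg h1]

end Aux4
section Aux5
variable {R E f}


lemma f_f (hf : ∀ k j, (f k j).comp (f k (j + 1)) = 0) (k : Fin r) (j : ℕ) (y : E k (j + 1 + 1)) : f k j (f k (j + 1) y) = 0 := by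
  have := LinearMap.ext_iff.1 (hf k j) y
  simpa using this

/-- diagonal vanishing: applying `f` twice in the same slot kills the pure tensor. -/
lemma diag_zero (hf : ∀ k j, (f k j).comp (f k (j + 1)) = 0) (s : Fin r) (j1 j2 : ℕ)
    (α : Fin r → ℕ) (h1 : α s = j1 + 1)
    (h2 : Function.update α s j1 s = j2 + 1) (x : ∀ k, E k (α k)) :
    (PiTensorProduct.tprod R)
      (dSlot R E f s j2 (Function.update α s j1) h2
        (dSlot R E f s j1 α h1 x)) = 0 := by
  have hj : j1 = j2 + 1 := by rwa [Function.update_self] at h2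
  subst hj
  apply MultilinearMap.map_coord_zero _ s
  rw [dSlot_self _ _ _ _ _ (by simp), dSlot_self _ _ _ _ _ (by simp)]
  simp only [castE_trans]
  rw [castE_self]
  rw [f_f hf]
  simp

/-- the `h₁`-case vanishing. -/
lemma zero_one (hf : ∀ k j, (f k j).comp (f k (j + 1)) = 0) (s : Fin r) (α : Fin r → ℕ) (j : ℕ) (hj : j = 1) (ha : α s = j + 1)
    (hβ : Function.update α s j = fun _ => 1) (x : ∀ k, E k (α k)) :
    hComp R E f (Function.update α s j) ((PiTensorProduct.tprod R)
      (dSlot R E f s j α ha x)) = 0 := by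
  subst hj
  rw [← hComp_congr f hβ, castT_tprod, hComp_one, PiTensorProduct.map_tprod]
  have h0 : (fun k => f k 0 (castE R E k (congrFun hβ k) (dSlot R E f s 1 α ha x k))) s = 0 := by
    simp only [dSlot_self _ _ _ _ _ (by simp), castE_trans]
    rw [castE_self]
    rw [f_f hf]
  rw [MultilinearMap.map_coord_zero _ s h0]
  simp

/-- off-diagonal commutation (without signs). -/
lemma key_comm (s t : Fin r) (hst : s ≠ t) (a b : ℕ) (α : Fin r → ℕ)
    (ha : α s = a + 1) (hb : α t = b + 1)
    (hb' : Function.update α s a t = b + 1) (ha' : Function.update α t b s = a + 1)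
    (x : ∀ k, E k (α k)) :
    DirectSum.lof R _ (fun β => T R E β) (Function.update (Function.update α s a) t b)
      ((PiTensorProduct.tprod R) (dSlot R E f t b (Function.update α s a) hb'
        (dSlot R E f s a α ha x)))
    = DirectSum.lof R _ (fun β => T R E β) (Function.update (Function.update α t b) s a)
      ((PiTensorProduct.tprod R) (dSlot R E f s a (Function.update α t b) ha'
        (dSlot R E f t b α hb x))) := by
  have hγ : Function.update (Function.update α t b) s a
      = Function.update (Function.update α s a) t b :=
    Function.update_comm hst.symm b a α
  rw [← lof_castT hγ, castT_tprod]
  refine DFunLike.congr_arg _ (DFunLike.congr_arg _ (funext fun k => ?_))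
  by_cases hks : k = s
  · subst hks
    rw [dSlot_ne _ _ _ _ _ hst (by rw [Function.update_of_ne hst]),
      dSlot_self _ _ _ _ _ (by simp),
      dSlot_self _ _ _ _ _ (by simp),
      dSlot_ne _ _ _ _ _ hst (by rw [Function.update_of_ne hst])]
    simp only [castE_trans]
  · by_cases hkt : k = t
    · subst hkt
      rw [dSlot_self _ _ _ _ _ (by simp),
        dSlot_ne _ _ _ _ _ hst.symm (by rw [Function.update_of_ne hst.symm]),
        dSlot_ne _ _ _ _ _ hst.symm (by rw [Function.update_of_ne hst.symm]),
        dSlot_self _ _ _ _ _ (by simp)]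
      simp only [castE_trans]
    · rw [dSlot_ne _ _ _ _ _ hkt (by rw [Function.update_of_ne hkt]),
        dSlot_ne _ _ _ _ _ hks (by rw [Function.update_of_ne hks]),
        dSlot_ne _ _ _ _ _ hks (by rw [Function.update_of_ne hks]),
        dSlot_ne _ _ _ _ _ hkt (by rw [Function.update_of_ne hkt])]
      simp only [castE_trans]

end Aux5
section Koszul

lemma koszul_update_of_not_lt {α : Fin r → ℕ} (s t : Fin r) (h : ¬ s < t) (c : ℕ) :
    koszulSign t (Function.update α s c) = koszulSign t α := by
  unfold koszulSign
  congr 1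
  refine Finset.sum_congr rfl fun k hk => ?_
  have hks : k ≠ s := by
    rintro rfl
    exact h (by simpa using hk)
  rw [Function.update_of_ne hks]

lemma koszul_update_of_lt {α : Fin r → ℕ} (s t : Fin r) (h : s < t) (hs : 1 ≤ α s) :
    koszulSign t (Function.update α s (α s - 1)) = - koszulSign t α := by
  unfold koszulSign
  have hmem : s ∈ Finset.univ.filter (fun k => k < t) := by simp [h]
  rw [Finset.sum_update_of_mem hmem, Finset.sum_eq_sum_sdiff_singleton_add hmem]
  obtain ⟨m, hm⟩ := Nat.exists_eq_succ_of_ne_zero (by omega : α s ≠ 0)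
  rw [hm, pow_add, pow_add, pow_succ, Nat.succ_sub_one]
  ring

lemma koszul_cancel {α : Fin r → ℕ} (s t : Fin r) (hst : s ≠ t) (hs : 1 ≤ α s) (ht : 1 ≤ α t) :
    koszulSign t (Function.update α s (α s - 1)) * koszulSign s α
      = -(koszulSign s (Function.update α t (α t - 1)) * koszulSign t α) := by
  rcases lt_or_gt_of_ne hst with h | h
  · rw [koszul_update_of_lt s t h hs, koszul_update_of_not_lt t s (not_lt.2 h.le)]
    ring
  · rw [koszul_update_of_not_lt s t (not_lt.2 h.le), koszul_update_of_lt t s h ht]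
    ring

end Koszul
open Classical in
/-- The `(s,t)` double-differential term applied to a pure tensor. -/
noncomputable def Dterm (α : Fin r → ℕ) (x : ∀ k, E k (α k)) (s t : Fin r) : G R E :=
  if h : 2 ≤ α s ∧ 2 ≤ Function.update α s (α s - 1) t then
    (koszulSign s α * koszulSign t (Function.update α s (α s - 1))) •
      DirectSum.lof R _ (fun β => T R E β)
        (Function.update (Function.update α s (α s - 1)) t
          (Function.update α s (α s - 1) t - 1))
        ((PiTensorProduct.tprod R)
          (dSlot R E f t (Function.update α s (α s - 1) t - 1)
            (Function.update α s (α s - 1)) (by omega)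
            (dSlot R E f s (α s - 1) α (by omega) x)))
  else 0

section Aux6
variable {R E f}

lemma hGlobal_lof (γ : Fin r → ℕ) (y : T R E γ) :
    hGlobal R E f (DirectSum.lof R _ (fun β => T R E β) γ y) = hComp R E f γ y :=
  DirectSum.toModule_lof R _ _

lemma incl_lof {k : ℕ} (β : {β : Fin r → ℕ // Adm k β}) (y : T R E β.1) :
    incl R E k (DirectSum.lof R _ (fun β : {β : Fin r → ℕ // Adm k β} => T R E β.1) β y)
      = DirectSum.lof R _ (fun γ => T R E γ) β.1 y :=
  DirectSum.toModule_lof R _ _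

open Classical in
lemma proj_lof {k : ℕ} {γ : Fin r → ℕ} (h : Adm k γ) (y : T R E γ) :
    proj R E k (DirectSum.lof R _ (fun β => T R E β) γ y)
      = DirectSum.lof R _ (fun β : {β : Fin r → ℕ // Adm k β} => T R E β.1) ⟨γ, h⟩ y := by
  unfold proj
  rw [DirectSum.toModule_lof, dif_pos h]

lemma lof_tprod_dSlot_congr {β : Fin r → ℕ} (t : Fin r) {j j' : ℕ} (hj : j = j')
    (h : β t = j + 1) (y : ∀ k, E k (β k)) :
    DirectSum.lof R _ (fun γ => T R E γ) (Function.update β t j)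
        ((PiTensorProduct.tprod R) (dSlot R E f t j β h y))
      = DirectSum.lof R _ (fun γ => T R E γ) (Function.update β t j')
        ((PiTensorProduct.tprod R) (dSlot R E f t j' β (hj ▸ h) y)) := by
  subst hj; rfl

lemma Dterm_diag (hf : ∀ k j, (f k j).comp (f k (j + 1)) = 0)
    (α : Fin r → ℕ) (x : ∀ k, E k (α k)) (s : Fin r) :
    Dterm R E f α x s s = 0 := by
  unfold Dterm
  by_cases h : 2 ≤ α s ∧ 2 ≤ Function.update α s (α s - 1) s
  · rw [dif_pos h]
    rw [diag_zero hf s (α s - 1) (Function.update α s (α s - 1) s - 1) α (by omega)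
      (by have := h.2; omega) x]
    simp
  · rw [dif_neg h]

lemma Dterm_swap (hf : ∀ k j, (f k j).comp (f k (j + 1)) = 0)
    (α : Fin r → ℕ) (x : ∀ k, E k (α k)) (s t : Fin r) (hst : s ≠ t) :
    Dterm R E f α x s t + Dterm R E f α x t s = 0 := by
  unfold Dterm
  by_cases h : 2 ≤ α s ∧ 2 ≤ α t
  · rw [dif_pos (by rw [Function.update_of_ne hst.symm]; exact h),
      dif_pos (by rw [Function.update_of_ne hst]; exact ⟨h.2, h.1⟩)]
    rw [lof_tprod_dSlot_congr t (by rw [Function.update_of_ne hst.symm]) _ _,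
      lof_tprod_dSlot_congr s (by rw [Function.update_of_ne hst]) _ _]
    rw [key_comm s t hst (α s - 1) (α t - 1) α (by omega) (by omega)
      (by rw [Function.update_of_ne hst.symm]; omega)
      (by rw [Function.update_of_ne hst]; omega) x]
    rw [← add_smul]
    have hsign : koszulSign s α * koszulSign t (Function.update α s (α s - 1))
        + koszulSign t α * koszulSign s (Function.update α t (α t - 1)) = 0 := by
      have := koszul_cancel s t hst (by omega : 1 ≤ α s) (by omega : 1 ≤ α t)
      linarith [this]
    rw [hsign, zero_smul]
  · rw [dif_neg, dif_neg, add_zero]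
    · intro hc
      rw [Function.update_of_ne hst] at hc
      exact h ⟨hc.2, hc.1⟩
    · intro hc
      rw [Function.update_of_ne hst.symm] at hc
      exact h hc

end Aux6
section Aux7
variable {R E f}

open Classical in
lemma expand_s (hf : ∀ k j, (f k j).comp (f k (j + 1)) = 0) {α : Fin r → ℕ}
    (x : ∀ k, E k (α k)) (s : Fin r) :
    hGlobal R E f ((if h : 2 ≤ α s then
      (DirectSum.lof R _ (fun β => T R E β) (Function.update α s (α s - 1))) ∘ₗ
        (koszulSign s α • diffComp R E f s (α s - 1) α (by omega))
    else 0) ((PiTensorProduct.tprod R) x)) = ∑ t, Dterm R E f α x s t := by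
  by_cases hs : 2 ≤ α s
  · rw [dif_pos hs]
    simp only [LinearMap.comp_apply, LinearMap.smul_apply]
    change hGlobal R E f (DirectSum.lof R _ (fun β => T R E β) _
      (koszulSign s α • diffComp R E f s (α s - 1) α _ (PiTensorProduct.tprod R x))) = _
    rw [diffComp_tprod, map_zsmul, map_zsmul, hGlobal_lof]
    by_cases hone : Function.update α s (α s - 1) = fun _ => 1
    · rw [zero_one hf s α (α s - 1) (by have := congrFun hone s; simpa using this)
        (by omega) hone x, smul_zero]
      symm
      apply Finset.sum_eq_zero
      intro t _
      unfold Dterm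
      rw [dif_neg]
      intro hc
      have h2 := hc.2
      have h1t : Function.update α s (α s - 1) t = 1 := congrFun hone t
      rw [h1t] at h2
      omega
    · rw [hComp_ne hone, LinearMap.sum_apply, Finset.smul_sum]
      refine Finset.sum_congr rfl fun t _ => ?_
      by_cases ht : 2 ≤ Function.update α s (α s - 1) t
      · rw [dif_pos ht]
        simp only [LinearMap.comp_apply, LinearMap.smul_apply]
        change koszulSign s α • DirectSum.lof R _ (fun β => T R E β) _
          (koszulSign t (Function.update α s (α s - 1)) • diffComp R E f t _ _ _
            (PiTensorProduct.tprod R _)) = _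
        rw [diffComp_tprod, map_zsmul, smul_smul]
        unfold Dterm
        rw [dif_pos ⟨hs, ht⟩]
      · rw [dif_neg ht]
        unfold Dterm
        rw [dif_neg (by rintro ⟨-, hc⟩; exact ht hc)]
        simp
  · rw [dif_neg hs]
    simp only [LinearMap.zero_apply, map_zero]
    symm
    apply Finset.sum_eq_zero
    intro t _
    unfold Dterm
    rw [dif_neg (by rintro ⟨hc, -⟩; exact hs hc)]

lemma step2 (hf : ∀ k j, (f k j).comp (f k (j + 1)) = 0) {α : Fin r → ℕ}
    (hne : α ≠ fun _ => 1) (x : ∀ k, E k (α k)) :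
    hGlobal R E f (hComp R E f α ((PiTensorProduct.tprod R) x)) = 0 := by
  rw [hComp_ne hne, LinearMap.sum_apply, map_sum]
  rw [Finset.sum_congr rfl fun s _ => expand_s hf x s]
  rw [← Finset.sum_product']
  apply Finset.sum_ninvolution Prod.swap
  · intro p
    by_cases hst : p.1 = p.2
    · rw [Prod.swap]
      simp only [← hst]
      rw [Dterm_diag hf]
      simp
    · exact Dterm_swap hf α x p.1 p.2 hst
  · intro p hp hc
    apply hp
    have hst : p.2 = p.1 := congrArg Prod.fst hc
    rw [hst]
    exact Dterm_diag hf α x p.1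
  · exact fun p => Finset.mem_product.2 ⟨Finset.mem_univ _, Finset.mem_univ _⟩
  · exact fun p => Prod.swap_swap p

end Aux7
open Classical in
variable {R E f} in
lemma step1 {k : ℕ} {α : Fin r → ℕ} (h1 : ∀ i, 1 ≤ α i) (h2 : ∑ i, α i = (k + 1) + r)
    (z : T R E α) :
    incl R E (k + 1) (proj R E (k + 1) (hComp R E f α z)) = hComp R E f α z := by
  have hne : α ≠ fun _ => 1 := by
    intro hh
    rw [hh] at h2
    simp at h2
  rw [hComp_ne (f := f) hne, LinearMap.sum_apply, map_sum, map_sum]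
  refine Finset.sum_congr rfl fun s _ => ?_
  by_cases hs : 2 ≤ α s
  · rw [dif_pos hs]
    have hadm : Adm (k + 1) (Function.update α s (α s - 1)) := by
      constructor
      · intro i
        by_cases his : i = s
        · subst his; rw [Function.update_self]; omega
        · rw [Function.update_of_ne his]; exact h1 i
      · rw [Finset.sum_update_of_mem (Finset.mem_univ s)]
        have hd := Finset.sum_eq_sum_sdiff_singleton_add (Finset.mem_univ s) α
        omega
    simp only [LinearMap.comp_apply]
    rw [proj_lof hadm, incl_lof]
  · rw [dif_neg hs]
    simp

/-- The diamond product `(H, h) = E¹ ⋄ ⋯ ⋄ Eʳ` of complexes of modules is itself a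
complex: `h_k ∘ h_{k+1} = 0` for all `k ≥ 1`. -/
theorem diamond_is_complex (hf : ∀ k j, (f k j).comp (f k (j + 1)) = 0) (k : ℕ) :
    hMap R E f k ∘ₗ hMap R E f (k + 1) = 0 := by
  apply DirectSum.linearMap_ext
  intro β
  apply LinearMap.ext
  intro y
  have hβ : (∀ i, 1 ≤ β.1 i) ∧ ∑ i, β.1 i = (k + 1) + r := β.2
  have hne : β.1 ≠ fun _ => 1 := by
    intro hh
    have h3 := hβ.2
    rw [hh] at h3
    simp at h3
  simp only [LinearMap.comp_apply, LinearMap.zero_apply, LinearMap.zero_comp]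
  unfold hMap
  simp only [LinearMap.comp_apply]
  rw [incl_lof, hGlobal_lof, step1 hβ.1 hβ.2]
  have hzero : hGlobal R E f ∘ₗ hComp R E f β.1 = 0 := by
    apply PiTensorProduct.ext
    apply MultilinearMap.ext
    intro x
    simpa using step2 hf hne x
  rw [show hGlobal R E f (hComp R E f β.1 y) = 0 from by
    simpa using LinearMap.congr_fun hzero y]
  simp

end Diamond
end
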